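/- Define φ : [-1,1] → ℝ by φ(x) = (3/(2π)) sin((2π/3)(x+1)) for x ∈ [-1, 1/2], and φ(x) = -(1/π) cos(π(x-1)) for x ∈ [1/2, 1]. Then φ is continuously differentiable on [-1,1], twice differentiable on (-1,1) away from x = 1/2, and satisfies -φ'' = (2π/3)² φ⁺ - π² φ⁻ almost everywhere on (-1,1), together with the boundary conditions φ(-1) = 0 and φ(1) = -(2/3) φ(-1/4). -/

import Mathlib

open Real Set Filter

noncomputable def Fex (x : ℝ) : ℝ := (3 / (2 * π)) * sin ((2 * π / 3) * (x + 1))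
noncomputable def Gex (x : ℝ) : ℝ := -(1 / π) * cos (π * (x - 1))
noncomputable def Dex (x : ℝ) : ℝ :=
  if x ≤ 1 / 2 then cos ((2 * π / 3) * (x + 1)) else sin (π * (x - 1))

lemma hasDerivAt_Fex (x : ℝ) : HasDerivAt Fex (cos ((2 * π / 3) * (x + 1))) x := by
  have h : HasDerivAt (fun x : ℝ => (2 * π / 3) * (x + 1)) (2 * π / 3) x := by
    simpa using (((hasDerivAt_id x).add_const 1).const_mul (2 * π / 3))
  have h2 := (h.sin).const_mul (3 / (2 * π))
  refine (h2 : HasDerivAt Fex _ x).congr_deriv ?_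
  have := pi_ne_zero
  field_simp

lemma hasDerivAt_Fex' (x : ℝ) :
    HasDerivAt (fun x : ℝ => cos ((2 * π / 3) * (x + 1)))
      (-((2 * π / 3) * sin ((2 * π / 3) * (x + 1)))) x := by
  have h : HasDerivAt (fun x : ℝ => (2 * π / 3) * (x + 1)) (2 * π / 3) x := by
    simpa using (((hasDerivAt_id x).add_const 1).const_mul (2 * π / 3))
  have h2 := h.cos
  convert h2 using 1
  ring

lemma hasDerivAt_Gex (x : ℝ) : HasDerivAt Gex (sin (π * (x - 1))) x := by
  have h : HasDerivAt (fun x : ℝ => π * (x - 1)) π x := by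
    simpa using (((hasDerivAt_id x).sub_const 1).const_mul π)
  have h2 := (h.cos).const_mul (-(1 / π))
  refine (h2 : HasDerivAt Gex _ x).congr_deriv ?_
  have := pi_ne_zero
  field_simp

lemma hasDerivAt_Gex' (x : ℝ) :
    HasDerivAt (fun x : ℝ => sin (π * (x - 1))) (π * cos (π * (x - 1))) x := by
  have h : HasDerivAt (fun x : ℝ => π * (x - 1)) π x := by
    simpa using (((hasDerivAt_id x).sub_const 1).const_mul π)
  have h2 := h.sin
  convert h2 using 1
  ring

lemma cosHalfEx : cos ((2 * π / 3) * ((1:ℝ) / 2 + 1)) = -1 := by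
  have e : (2 * π / 3) * ((1:ℝ) / 2 + 1) = π := by ring
  rw [e, cos_pi]

lemma sinHalfEx : sin (π * ((1:ℝ) / 2 - 1)) = -1 := by
  have e : π * ((1:ℝ) / 2 - 1) = -(π / 2) := by ring
  rw [e, sin_neg, sin_pi_div_two]

lemma Fex_half : Fex (1 / 2) = 0 := by
  have e : (2 * π / 3) * ((1:ℝ) / 2 + 1) = π := by ring
  show (3 / (2 * π)) * sin ((2 * π / 3) * ((1:ℝ) / 2 + 1)) = 0
  rw [e, sin_pi, mul_zero]

lemma Gex_half : Gex (1 / 2) = 0 := by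
  have e : π * ((1:ℝ) / 2 - 1) = -(π / 2) := by ring
  show -(1 / π) * cos (π * ((1:ℝ) / 2 - 1)) = 0
  rw [e, cos_neg, cos_pi_div_two, mul_zero]

lemma hasDerivAt_phi (φ : ℝ → ℝ)
    (hφ : ∀ x : ℝ, φ x = if x ≤ 1 / 2 then Fex x else Gex x) (x : ℝ) :
    HasDerivAt φ (Dex x) x := by
  rcases lt_trichotomy x (1 / 2) with h | h | h
  · have ev : φ =ᶠ[nhds x] Fex :=
      Filter.eventuallyEq_of_mem (Iio_mem_nhds h) fun y hy => by
        rw [hφ y, if_pos (le_of_lt hy)]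
    rw [Dex, if_pos h.le]
    exact (hasDerivAt_Fex x).congr_of_eventuallyEq ev
  · subst h
    have hle : HasDerivWithinAt φ (-1) (Iic (1 / 2 : ℝ)) (1 / 2) := by
      have h0 := ((hasDerivAt_Fex (1 / 2)).hasDerivWithinAt (s := Iic (1 / 2))).congr
        (fun y hy => (hφ y).trans (if_pos hy)) ((hφ _).trans (if_pos le_rfl))
      rwa [show ((1:ℝ)/2) = (1:ℝ)/2 from rfl, cosHalfEx] at h0
    have hge : HasDerivWithinAt φ (-1) (Ici (1 / 2 : ℝ)) (1 / 2) := by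
      have key : ∀ y ∈ Ici (1 / 2 : ℝ), φ y = Gex y := by
        intro y hy
        rcases eq_or_lt_of_le (Set.mem_Ici.mp hy) with h' | h'
        · rw [hφ y, ← h', if_pos le_rfl, Fex_half, Gex_half]
        · rw [hφ y, if_neg (not_le.mpr h')]
      have h0 := ((hasDerivAt_Gex (1 / 2)).hasDerivWithinAt (s := Ici (1 / 2))).congr
        key (key _ Set.self_mem_Ici)
      rwa [sinHalfEx] at h0
    have hu := hle.union hge
    rw [Set.Iic_union_Ici] at hu
    have hd : HasDerivAt φ (-1) (1 / 2) := hasDerivWithinAt_univ.mp hu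
    have : Dex (1 / 2) = -1 := by rw [Dex, if_pos le_rfl, cosHalfEx]
    rwa [this]
  · have ev : φ =ᶠ[nhds x] Gex :=
      Filter.eventuallyEq_of_mem (Ioi_mem_nhds h) fun y hy => by
        rw [hφ y, if_neg (not_le.mpr hy)]
    rw [Dex, if_neg (not_le.mpr h)]
    exact (hasDerivAt_Gex x).congr_of_eventuallyEq ev

lemma continuous_Dex : Continuous Dex := by
  have h1 : Continuous fun x : ℝ => cos ((2 * π / 3) * (x + 1)) := by fun_prop
  have h2 : Continuous fun x : ℝ => sin (π * (x - 1)) := by fun_prop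
  exact h1.if_le h2 continuous_id continuous_const fun x hx => by
    rw [hx, cosHalfEx, sinHalfEx]

/-- Example 3.6: the explicit function φ is C¹ on [-1,1],
twice differentiable away from x = 1/2, satisfies the jumping equation
-φ'' = (2π/3)² φ⁺ - π² φ⁻ there, and satisfies the 3-point boundary
conditions φ(-1) = 0, φ(1) = -(2/3) φ(-1/4). -/
theorem stmt_4 (φ : ℝ → ℝ)
    (hφ : ∀ x : ℝ, φ x =
      if x ≤ 1 / 2 then (3 / (2 * π)) * sin ((2 * π / 3) * (x + 1))
      else -(1 / π) * cos (π * (x - 1))) :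
    ContDiffOn ℝ 1 φ (Set.Icc (-1) 1) ∧
    (∀ x ∈ Set.Ioo (-1 : ℝ) 1, x ≠ 1 / 2 →
      DifferentiableAt ℝ (deriv φ) x ∧
      deriv (deriv φ) x =
        -((2 * π / 3) ^ 2 * max (φ x) 0 - π ^ 2 * max (-φ x) 0)) ∧
    φ (-1) = 0 ∧ φ 1 = -(2 / 3) * φ (-1 / 4) := by
  have hφ' : ∀ x : ℝ, φ x = if x ≤ 1 / 2 then Fex x else Gex x := hφ
  have hD := hasDerivAt_phi φ hφ'
  have hderiv : deriv φ = Dex := funext fun x => (hD x).deriv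
  have hpi := pi_pos
  refine ⟨?_, ?_, ?_, ?_⟩
  · refine (contDiff_one_iff_deriv.mpr ⟨fun x => (hD x).differentiableAt, ?_⟩).contDiffOn
    rw [hderiv]; exact continuous_Dex
  · rintro x ⟨hx1, hx2⟩ hne
    rcases lt_or_gt_of_ne hne with h | h
    · have ev : deriv φ =ᶠ[nhds x] fun y => cos ((2 * π / 3) * (y + 1)) :=
        Filter.eventuallyEq_of_mem (Iio_mem_nhds h) fun y hy => by
          rw [hderiv, Dex, if_pos (le_of_lt hy)]
      have hd2 : HasDerivAt (deriv φ) (-((2 * π / 3) * sin ((2 * π / 3) * (x + 1)))) x :=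
        (hasDerivAt_Fex' x).congr_of_eventuallyEq ev
      refine ⟨hd2.differentiableAt, ?_⟩
      rw [hd2.deriv]
      have hθ0 : 0 ≤ (2 * π / 3) * (x + 1) := by nlinarith
      have hθπ : (2 * π / 3) * (x + 1) ≤ π := by nlinarith
      have hsin := sin_nonneg_of_nonneg_of_le_pi hθ0 hθπ
      have hφx : φ x = (3 / (2 * π)) * sin ((2 * π / 3) * (x + 1)) := by
        rw [hφ x, if_pos h.le]
      have hφnn : 0 ≤ φ x := by
        rw [hφx]; exact mul_nonneg (by positivity) hsin
      rw [max_eq_left hφnn, max_eq_right (neg_nonpos.mpr hφnn), hφx]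
      have := pi_ne_zero
      field_simp
      ring
    · have ev : deriv φ =ᶠ[nhds x] fun y => sin (π * (y - 1)) :=
        Filter.eventuallyEq_of_mem (Ioi_mem_nhds h) fun y hy => by
          rw [hderiv, Dex, if_neg (not_le.mpr hy)]
      have hd2 : HasDerivAt (deriv φ) (π * cos (π * (x - 1))) x :=
        (hasDerivAt_Gex' x).congr_of_eventuallyEq ev
      refine ⟨hd2.differentiableAt, ?_⟩
      rw [hd2.deriv]
      have hcos : 0 ≤ cos (π * (x - 1)) := by
        apply le_of_lt
        apply cos_pos_of_mem_Ioo
        constructor <;> nlinarith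
      have hφx : φ x = -(1 / π) * cos (π * (x - 1)) := by
        rw [hφ x, if_neg (not_le.mpr h)]
      have hφnp : φ x ≤ 0 := by
        rw [hφx]
        apply mul_nonpos_of_nonpos_of_nonneg _ hcos
        simp [le_of_lt hpi]
      rw [max_eq_right hφnp, max_eq_left (neg_nonneg.mpr hφnp), hφx]
      have := pi_ne_zero
      field_simp
      ring
  · rw [hφ (-1), if_pos (by norm_num)]
    have e : (2 * π / 3) * ((-1:ℝ) + 1) = 0 := by ring
    simp [e]
  · rw [hφ 1, if_neg (by norm_num), hφ (-1 / 4), if_pos (by norm_num)]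
    have e1 : π * ((1:ℝ) - 1) = 0 := by ring
    have e2 : (2 * π / 3) * ((-1 / 4 : ℝ) + 1) = π / 2 := by ring
    rw [e1, e2, cos_zero, sin_pi_div_two]
    have := pi_ne_zero
    field_simp
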